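/- There exists a non-full injective monotone map F : S → P between finite connected posets that is not final, yet mult(M, K_P) = mult(M∘F, K_S) for every functor M : P → vect_K. Concretely, take S the poset on {s₁,s₂,s₃,s₄} with s₁ ≤ s₃, s₂ ≤ s₃, s₂ ≤ s₄ (and no other nontrivial relations), P the poset on {p₁,p₂,p₃,p₄} with p₁ ≤ p₃ ≤ p₄ and p₂ ≤ p₃ (and hence p₁ ≤ p₄, p₂ ≤ p₄), and F(s_i) = p_i; then F is not final (since ↑p₃ ∩ im F-preimage structure gives p₃/F disconnected) but multiplicity of the entire interval module is preserved for all pointwise finite-dimensional modules. -/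

import Mathlib

open CategoryTheory CategoryTheory.Limits

/-- A subset `T` of a poset is connected (as a full subposet) if it is nonempty and any two
of its elements are joined by a finite zigzag of comparabilities within `T`. -/
def ZigzagConnected {P : Type*} [Preorder P] (T : Set P) : Prop :=
  T.Nonempty ∧ ∀ a b : T, Relation.ReflTransGen (fun x y : T => x.1 ≤ y.1 ∨ y.1 ≤ x.1) a b

/-- `F : S → P` is an injective monotone map between finite connected posets that is not full,
not final, and yet the rank of the canonical limit-to-colimit map (equivalently, by
connectedness, the multiplicity of the entire interval module) is preserved under restriction
along `F` for every pointwise finite-dimensional module `M : P ⥤ vect_K`. -/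
def MultPreservingNotFinal (K : Type) [Field K] (S P : Type) [PartialOrder S]
    [PartialOrder P] (F : S →o P) : Prop :=
  Finite S ∧ Finite P ∧
  ZigzagConnected (Set.univ : Set S) ∧ ZigzagConnected (Set.univ : Set P) ∧
  Function.Injective F ∧
  ¬ (∀ s s' : S, s ≤ s' ↔ F s ≤ F s') ∧
  ¬ F.monotone.functor.Final ∧
  ∀ M : P ⥤ ModuleCat K, (∀ q : P, FiniteDimensional K (M.obj q)) →
    ∀ (q : P) (s : S),
      Module.finrank K (LinearMap.range (limit.π M q ≫ colimit.ι M q).hom) =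
        Module.finrank K (LinearMap.range
          (limit.π (F.monotone.functor ⋙ M) s ≫ colimit.ι (F.monotone.functor ⋙ M) s).hom)

/-! ### The concrete posets -/

inductive S4 : Type | s1 | s2 | s3 | s4
deriving DecidableEq

instance : Fintype S4 := ⟨{.s1, .s2, .s3, .s4}, fun x => by cases x <;> decide⟩

inductive P4 : Type | p1 | p2 | p3 | p4
deriving DecidableEq

instance : Fintype P4 := ⟨{.p1, .p2, .p3, .p4}, fun x => by cases x <;> decide⟩

def S4.le : S4 → S4 → Bool
  | .s1, .s1 => true | .s1, .s3 => true
  | .s2, .s2 => true | .s2, .s3 => true | .s2, .s4 => true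
  | .s3, .s3 => true | .s4, .s4 => true
  | _, _ => false

def P4.le : P4 → P4 → Bool
  | .p1, .p1 => true | .p1, .p3 => true | .p1, .p4 => true
  | .p2, .p2 => true | .p2, .p3 => true | .p2, .p4 => true
  | .p3, .p3 => true | .p3, .p4 => true | .p4, .p4 => true
  | _, _ => false

instance instS4PO : PartialOrder S4 where
  le a b := S4.le a b = true
  le_refl := by decide
  le_trans := by decide
  le_antisymm := by decide

instance instP4PO : PartialOrder P4 where
  le a b := P4.le a b = true
  le_refl := by decide
  le_trans := by decide
  le_antisymm := by decide

instance : DecidableRel (· ≤ · : S4 → S4 → Prop) := fun a b => instDecidableEqBool (S4.le a b) true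
instance : DecidableRel (· ≤ · : P4 → P4 → Prop) := fun a b => instDecidableEqBool (P4.le a b) true

def Fmap : S4 →o P4 :=
  ⟨fun s => match s with
    | .s1 => P4.p1 | .s2 => P4.p2 | .s3 => P4.p3 | .s4 => P4.p4,
   by decide⟩

lemma P4.le_top : ∀ p : P4, p ≤ P4.p4 := by decide

section Modules

universe v

variable (K : Type) [Field K] (M : P4 ⥤ ModuleCat.{v} K)

local notation "N" => Fmap.monotone.functor ⋙ M

/-- The cocone on `M` with apex `M p₄` given by the structure maps to the top element. -/
noncomputable def coconeP : Cocone M where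
  pt := M.obj P4.p4
  ι :=
    { app := fun q => M.map (homOfLE (P4.le_top q))
      naturality := fun q q' f => by
        dsimp
        rw [Category.comp_id, ← M.map_comp]
        exact congrArg M.map (Subsingleton.elim _ _) }

/-- The cocone on `N = F ⋙ M` with apex `M p₄`. -/
noncomputable def coconeS : Cocone (Fmap.monotone.functor ⋙ M) where
  pt := M.obj P4.p4
  ι :=
    { app := fun s => M.map (homOfLE (P4.le_top (Fmap s)))
      naturality := fun s s' f => by
        dsimp
        rw [Category.comp_id]
        show M.map _ ≫ M.map _ = M.map _
        refine (M.map_comp _ _).symm.trans ?_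
        exact congrArg M.map (Subsingleton.elim _ _) }

lemma iotaP_split : colimit.ι M P4.p4 ≫ colimit.desc M (coconeP K M) = 𝟙 (M.obj P4.p4) := by
  rw [colimit.ι_desc]
  show M.map _ = _
  rw [show homOfLE (P4.le_top P4.p4) = 𝟙 P4.p4 from Subsingleton.elim _ _, M.map_id]

lemma iotaS_split :
    colimit.ι (Fmap.monotone.functor ⋙ M) S4.s4 ≫ colimit.desc _ (coconeS K M) =
      𝟙 ((Fmap.monotone.functor ⋙ M).obj S4.s4) := by
  rw [colimit.ι_desc]
  show M.map _ = _
  have : homOfLE (P4.le_top (Fmap S4.s4)) = 𝟙 P4.p4 := Subsingleton.elim _ _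
  exact (congrArg M.map this).trans (M.map_id P4.p4)

lemma iotaP_inj : Function.Injective (colimit.ι M P4.p4) := by
  intro x y h
  have h1 := LinearMap.congr_fun (congrArg ModuleCat.Hom.hom (iotaP_split K M)) x
  have h2 := LinearMap.congr_fun (congrArg ModuleCat.Hom.hom (iotaP_split K M)) y
  simp only [ModuleCat.hom_comp, ModuleCat.hom_id, LinearMap.comp_apply, LinearMap.id_apply] at h1 h2
  exact h1.symm.trans ((congrArg _ h).trans h2)

lemma iotaS_inj : Function.Injective (colimit.ι (Fmap.monotone.functor ⋙ M) S4.s4) := by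
  intro x y h
  have h1 := LinearMap.congr_fun (congrArg ModuleCat.Hom.hom (iotaS_split K M)) x
  have h2 := LinearMap.congr_fun (congrArg ModuleCat.Hom.hom (iotaS_split K M)) y
  simp only [ModuleCat.hom_comp, ModuleCat.hom_id, LinearMap.comp_apply, LinearMap.id_apply] at h1 h2
  exact h1.symm.trans ((congrArg _ h).trans h2)

/-- Cone condition for the restricted limit. -/
lemma piS_w (s s' : S4) (h : s ≤ s') (h' : Fmap s ≤ Fmap s') :
    limit.π (Fmap.monotone.functor ⋙ M) s ≫ M.map (homOfLE h') =
      limit.π (Fmap.monotone.functor ⋙ M) s' :=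
  limit.w (Fmap.monotone.functor ⋙ M) (homOfLE h)

lemma piS_w34 (h' : P4.p3 ≤ P4.p4) :
    limit.π (Fmap.monotone.functor ⋙ M) S4.s3 ≫ M.map (homOfLE h') =
      limit.π (Fmap.monotone.functor ⋙ M) S4.s4 := by
  refine Eq.trans ?_ (piS_w K M S4.s2 S4.s4 (by decide) (by decide))
  refine (congrArg (fun x => x ≫ M.map (homOfLE h'))
    (piS_w K M S4.s2 S4.s3 (by decide) (by decide)).symm).trans ?_
  refine (Category.assoc _ _ _).trans ?_
  exact congrArg (fun x => limit.π (Fmap.monotone.functor ⋙ M) S4.s2 ≫ x)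
    ((M.map_comp _ _).symm.trans (congrArg M.map (Subsingleton.elim _ _)))

lemma piS_w14 (h' : P4.p1 ≤ P4.p4) :
    limit.π (Fmap.monotone.functor ⋙ M) S4.s1 ≫ M.map (homOfLE h') =
      limit.π (Fmap.monotone.functor ⋙ M) S4.s4 := by
  have hh : homOfLE h' = homOfLE (by decide : P4.p1 ≤ P4.p3) ≫
      homOfLE (by decide : P4.p3 ≤ P4.p4) := Subsingleton.elim _ _
  refine Eq.trans ?_ (piS_w34 K M (by decide))
  refine (congrArg (fun x => limit.π (Fmap.monotone.functor ⋙ M) S4.s1 ≫ x)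
    ((congrArg M.map hh).trans (M.map_comp _ _))).trans ?_
  refine (Category.assoc _ _ _).symm.trans ?_
  exact congrArg (fun x => x ≫ M.map (homOfLE (by decide : P4.p3 ≤ P4.p4)))
    (piS_w K M S4.s1 S4.s3 (by decide) (by decide))

/-- The cone on `M` with apex `lim N`. -/
noncomputable def coneP : Cone M where
  pt := limit (Fmap.monotone.functor ⋙ M)
  π :=
    { app := fun p =>
        match p with
        | .p1 => limit.π (Fmap.monotone.functor ⋙ M) S4.s1
        | .p2 => limit.π (Fmap.monotone.functor ⋙ M) S4.s2
        | .p3 => limit.π (Fmap.monotone.functor ⋙ M) S4.s3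
        | .p4 => limit.π (Fmap.monotone.functor ⋙ M) S4.s4
      naturality := fun p p' f => by
        have hle := leOfHom f
        dsimp
        rw [Category.id_comp]
        rw [show f = homOfLE hle from Subsingleton.elim _ _]
        cases p <;> cases p' <;> first
          | exact absurd hle (by decide)
          | (rw [show homOfLE hle = 𝟙 _ from Subsingleton.elim _ _, M.map_id, Category.comp_id])
          | exact (piS_w K M _ _ (by decide) hle).symm
          | exact (piS_w34 K M hle).symm
          | exact (piS_w14 K M hle).symm }

lemma pre_split :
    limit.lift M (coneP K M) ≫ limit.pre M Fmap.monotone.functor =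
      𝟙 (limit (Fmap.monotone.functor ⋙ M)) := by
  apply limit.hom_ext
  intro s
  simp only [Category.id_comp, Category.assoc, limit.pre_π, limit.lift_π]
  cases s <;> rfl

lemma pre_surj : Function.Surjective (limit.pre M Fmap.monotone.functor) := by
  intro y
  refine ⟨limit.lift M (coneP K M) y, ?_⟩
  have := LinearMap.congr_fun (congrArg ModuleCat.Hom.hom (pre_split K M)) y
  exact this

lemma range_pi_eq :
    LinearMap.range (limit.π M P4.p4).hom =
      LinearMap.range (limit.π (Fmap.monotone.functor ⋙ M) S4.s4).hom := by
  have hcomp : (limit.π M P4.p4).hom =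
      (limit.π (Fmap.monotone.functor ⋙ M) S4.s4).hom.comp (limit.pre M Fmap.monotone.functor).hom := by
    have := congrArg ModuleCat.Hom.hom (limit.pre_π M Fmap.monotone.functor S4.s4)
    rw [ModuleCat.hom_comp] at this
    exact this.symm
  exact (congrArg LinearMap.range hcomp).trans
    (LinearMap.range_comp_of_range_eq_top _ (LinearMap.range_eq_top.2 (pre_surj K M)))

/-- The canonical map is independent of the index, `P` side. -/
lemma constP (q : P4) :
    limit.π M q ≫ colimit.ι M q = limit.π M P4.p4 ≫ colimit.ι M P4.p4 := by
  have h1 : limit.π M q ≫ M.map (homOfLE (P4.le_top q)) = limit.π M P4.p4 := limit.w M _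
  have h2 : M.map (homOfLE (P4.le_top q)) ≫ colimit.ι M P4.p4 = colimit.ι M q := colimit.w M _
  rw [← h2, ← Category.assoc, h1]

lemma constS_step (s s' : S4) (h : s ≤ s') :
    limit.π (Fmap.monotone.functor ⋙ M) s ≫ colimit.ι (Fmap.monotone.functor ⋙ M) s =
      limit.π (Fmap.monotone.functor ⋙ M) s' ≫ colimit.ι (Fmap.monotone.functor ⋙ M) s' := by
  have h1 := limit.w (Fmap.monotone.functor ⋙ M) (homOfLE h)
  have h2 := colimit.w (Fmap.monotone.functor ⋙ M) (homOfLE h)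
  rw [← h2, ← Category.assoc, h1]

/-- The canonical map is independent of the index, `S` side. -/
lemma constS (s : S4) :
    limit.π (Fmap.monotone.functor ⋙ M) s ≫ colimit.ι (Fmap.monotone.functor ⋙ M) s =
      limit.π (Fmap.monotone.functor ⋙ M) S4.s4 ≫ colimit.ι (Fmap.monotone.functor ⋙ M) S4.s4 := by
  cases s with
  | s1 =>
      rw [constS_step K M S4.s1 S4.s3 (by decide),
        ← constS_step K M S4.s2 S4.s3 (by decide), constS_step K M S4.s2 S4.s4 (by decide)]
  | s2 => exact constS_step K M S4.s2 S4.s4 (by decide)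
  | s3 =>
      rw [← constS_step K M S4.s2 S4.s3 (by decide), constS_step K M S4.s2 S4.s4 (by decide)]
  | s4 => rfl

lemma rank_eq (q : P4) (s : S4) :
    Module.finrank K (LinearMap.range (limit.π M q ≫ colimit.ι M q).hom) =
      Module.finrank K (LinearMap.range
        (limit.π (Fmap.monotone.functor ⋙ M) s ≫ colimit.ι (Fmap.monotone.functor ⋙ M) s).hom) := by
  rw [constP K M q, constS K M s, ModuleCat.hom_comp, ModuleCat.hom_comp,
    LinearMap.range_comp, LinearMap.range_comp]
  have e1 := (Submodule.equivMapOfInjective (colimit.ι M P4.p4).hom (iotaP_inj K M)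
    (LinearMap.range (limit.π M P4.p4).hom)).finrank_eq
  have e2 := (Submodule.equivMapOfInjective (colimit.ι (Fmap.monotone.functor ⋙ M) S4.s4).hom (iotaS_inj K M)
    (LinearMap.range (limit.π (Fmap.monotone.functor ⋙ M) S4.s4).hom)).finrank_eq
  rw [← e1, ← e2, range_pi_eq K M]
  rfl

end Modules

/-! ### Non-finality -/

lemma not_final : ¬ Fmap.monotone.functor.Final := by
  intro hF
  haveI : CategoryTheory.IsConnected (StructuredArrow P4.p3 Fmap.monotone.functor) := hF.out _
  have key : ∀ (X Y : StructuredArrow P4.p3 Fmap.monotone.functor) (_ : X ⟶ Y),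
      (X.right == S4.s3) = (Y.right == S4.s3) := by
    intro X Y f
    have h3 : ∀ x y : S4, P4.p3 ≤ Fmap x → x ≤ y → (x == S4.s3) = (y == S4.s3) := by decide
    exact h3 _ _ (leOfHom X.hom) (leOfHom f.right)
  have hcon := CategoryTheory.constant_of_preserves_morphisms
    (fun X : StructuredArrow P4.p3 Fmap.monotone.functor => X.right == S4.s3) key
    (StructuredArrow.mk (Y := S4.s3) (homOfLE (by decide : P4.p3 ≤ Fmap S4.s3)))
    (StructuredArrow.mk (Y := S4.s4) (homOfLE (by decide : P4.p3 ≤ Fmap S4.s4)))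
  simp only [StructuredArrow.mk_right] at hcon
  exact absurd hcon (by decide)

/-! ### Connectivity -/

lemma zigzag_S : ZigzagConnected (Set.univ : Set S4) := by
  refine ⟨⟨S4.s1, trivial⟩, ?_⟩
  set r := fun x y : (Set.univ : Set S4) => x.1 ≤ y.1 ∨ y.1 ≤ x.1 with hr
  have hsymm : Symmetric r := fun x y h => h.symm
  have toHub : ∀ x : S4, Relation.ReflTransGen r ⟨x, trivial⟩ ⟨S4.s2, trivial⟩ := by
    intro x
    cases x with
    | s1 =>
        exact Relation.ReflTransGen.head (b := ⟨S4.s3, trivial⟩) (Or.inl (by decide))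
          (Relation.ReflTransGen.single (Or.inr (by decide)))
    | s2 => exact Relation.ReflTransGen.refl
    | s3 => exact Relation.ReflTransGen.single (Or.inr (by decide))
    | s4 => exact Relation.ReflTransGen.single (Or.inr (by decide))
  rintro ⟨a, _⟩ ⟨b, _⟩
  exact (toHub a).trans (haveI : Std.Symm r := ⟨fun _ _ h => hsymm h⟩
    Std.Symm.symm (r := Relation.ReflTransGen r) _ _ (toHub b))

lemma zigzag_P : ZigzagConnected (Set.univ : Set P4) := by
  refine ⟨⟨P4.p1, trivial⟩, ?_⟩
  set r := fun x y : (Set.univ : Set P4) => x.1 ≤ y.1 ∨ y.1 ≤ x.1 with hr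
  have hsymm : Symmetric r := fun x y h => h.symm
  have toHub : ∀ x : P4, Relation.ReflTransGen r ⟨x, trivial⟩ ⟨P4.p3, trivial⟩ := by
    intro x
    cases x with
    | p1 => exact Relation.ReflTransGen.single (Or.inl (by decide))
    | p2 => exact Relation.ReflTransGen.single (Or.inl (by decide))
    | p3 => exact Relation.ReflTransGen.refl
    | p4 => exact Relation.ReflTransGen.single (Or.inr (by decide))
  rintro ⟨a, _⟩ ⟨b, _⟩
  exact (toHub a).trans (haveI : Std.Symm r := ⟨fun _ _ h => hsymm h⟩
    Std.Symm.symm (r := Relation.ReflTransGen r) _ _ (toHub b))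

/-- There exists a non-full injective monotone map `F : S → P` between finite
connected posets that is not final, yet `mult(M, K_P) = mult(M ∘ F, K_S)` for every functor
`M : P ⥤ vect_K`. -/
theorem exists_non_full_not_final_multiplicity_preserving (K : Type) [Field K] :
    ∃ (S P : Type) (iS : PartialOrder S) (iP : PartialOrder P)
      (F : @OrderHom S P iS.toPreorder iP.toPreorder),
      @MultPreservingNotFinal K _ S P iS iP F := by
  refine ⟨S4, P4, instS4PO, instP4PO, Fmap, ?_, ?_, ?_, ?_, ?_, ?_, ?_, ?_⟩
  · exact Finite.of_fintype _
  · exact Finite.of_fintype _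
  · exact zigzag_S
  · exact zigzag_P
  · decide
  · intro h
    exact absurd ((h S4.s3 S4.s4).2 (by decide)) (by decide)
  · exact not_final
  · intro M _ q s
    exact rank_eq K M q s
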